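/- Let ε > 0, let L = [c,d] be a compact interval, let b : [t_0,∞) → ℝ be continuous with b(t) ∈ L for all t ≥ t_0, and let u : [t_0,∞) → ℝ be differentiable and satisfy ε·u′(t) = −u(t) + b(t) for all t ≥ t_0, with u(t_0) ∉ L. Then one of the following holds: (i) there exists a finite t_1 ≥ t_0 such that u(t) ∈ L for all t ≥ t_1; or (ii) u is monotone on [t_0,∞) and u(t) converges as t → ∞ to one of the endpoints c or d of L. -/

import Mathlib

open Set Filter

/-- Invariance: once the solution is `≤ d`, it stays `≤ d`. -/
lemma aux_stay_le {ε t₀ d : ℝ} (hε : 0 < ε) (b u : ℝ → ℝ)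
    (hbd : ∀ t : ℝ, t₀ ≤ t → b t ≤ d)
    (hu : ∀ t : ℝ, t₀ ≤ t → HasDerivAt u ((-u t + b t) / ε) t)
    {t₁ : ℝ} (ht₁ : t₀ ≤ t₁) (h1 : u t₁ ≤ d) :
    ∀ t : ℝ, t₁ ≤ t → u t ≤ d := by
  have hcont : ContinuousOn u (Ici t₀) :=
    fun t ht => ((hu t ht).continuousAt).continuousWithinAt
  intro s hs
  by_contra hgt
  push_neg at hgt
  have hts : Icc t₁ s ⊆ Ici t₀ := fun x hx => le_trans ht₁ hx.1
  have hcs : ContinuousOn u (Icc t₁ s) := hcont.mono hts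
  have hSne : (Icc t₁ s ∩ u ⁻¹' Iic d).Nonempty := ⟨t₁, ⟨le_refl _, hs⟩, h1⟩
  have hSbdd : BddAbove (Icc t₁ s ∩ u ⁻¹' Iic d) := ⟨s, fun x hx => hx.1.2⟩
  have hSclosed : IsClosed (Icc t₁ s ∩ u ⁻¹' Iic d) :=
    hcs.preimage_isClosed_of_isClosed isClosed_Icc isClosed_Iic
  obtain ⟨s₀, hs₀eq⟩ : ∃ s₀ : ℝ, s₀ = sSup (Icc t₁ s ∩ u ⁻¹' Iic d) := ⟨_, rfl⟩
  have hmem : s₀ ∈ Icc t₁ s ∩ u ⁻¹' Iic d := hs₀eq ▸ hSclosed.csSup_mem hSne hSbdd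
  have hs₀le : u s₀ ≤ d := hmem.2
  have hs₀s : s₀ < s := lt_of_le_of_ne hmem.1.2 (by rintro rfl; exact absurd hs₀le (not_le.2 hgt))
  have hkey : ∀ t ∈ Ioo s₀ s, d < u t := by
    intro t ht
    by_contra h
    push_neg at h
    have hmem' : t ∈ Icc t₁ s ∩ u ⁻¹' Iic d := ⟨⟨le_trans hmem.1.1 ht.1.le, ht.2.le⟩, h⟩
    exact absurd (hs₀eq ▸ le_csSup hSbdd hmem') (not_le.2 ht.1)
  have hanti : StrictAntiOn u (Icc s₀ s) := by
    apply strictAntiOn_of_deriv_neg (convex_Icc _ _)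
      (hcont.mono (fun x hx => le_trans (le_trans ht₁ hmem.1.1) hx.1))
    intro x hx
    rw [interior_Icc] at hx
    have hx0 : t₀ ≤ x := le_trans (le_trans ht₁ hmem.1.1) hx.1.le
    rw [(hu x hx0).deriv]
    apply div_neg_of_neg_of_pos _ hε
    have h1 := hkey x hx
    have h2 := hbd x hx0
    linarith
  have := hanti ⟨le_refl _, hs₀s.le⟩ ⟨hs₀s.le, le_refl _⟩ hs₀s
  linarith

/-- If the solution stays above `d` forever, it is antitone and tends to `d`. -/
lemma aux_above_forever {ε t₀ c d : ℝ} (hε : 0 < ε) (b u : ℝ → ℝ)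
    (hbL : ∀ t : ℝ, t₀ ≤ t → b t ∈ Icc c d)
    (hu : ∀ t : ℝ, t₀ ≤ t → HasDerivAt u ((-u t + b t) / ε) t)
    (hgt : ∀ t : ℝ, t₀ ≤ t → d < u t) :
    AntitoneOn u (Ici t₀) ∧ Tendsto u atTop (nhds d) := by
  have hcont : ContinuousOn u (Ici t₀) :=
    fun t ht => ((hu t ht).continuousAt).continuousWithinAt
  have hanti : AntitoneOn u (Ici t₀) := by
    apply antitoneOn_of_deriv_nonpos (convex_Ici _) hcont
    · intro x hx
      rw [interior_Ici] at hx
      exact ((hu x hx.le).differentiableAt).differentiableWithinAt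
    · intro x hx
      rw [interior_Ici] at hx
      rw [(hu x hx.le).deriv]
      apply div_nonpos_of_nonpos_of_nonneg _ hε.le
      have h1 := hgt x hx.le
      have h2 := (hbL x hx.le).2
      linarith
  refine ⟨hanti, ?_⟩
  rw [Metric.tendsto_atTop]
  intro η hη
  -- first find a point where u < d + η
  have hex : ∃ s : ℝ, t₀ ≤ s ∧ u s < d + η := by
    by_contra h
    push_neg at h
    -- then u decreases at linear rate, contradiction
    have hganti : AntitoneOn (fun t => u t + (η / ε) * t) (Ici t₀) := by
      apply antitoneOn_of_deriv_nonpos (convex_Ici _)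
      · exact hcont.add ((continuous_const.mul continuous_id).continuousOn)
      · intro x hx
        rw [interior_Ici] at hx
        have hd : HasDerivAt (fun t => u t + (η / ε) * t) ((-u x + b x) / ε + η / ε) x := by
          have h := (hu x hx.le).add ((hasDerivAt_id x).const_mul (η / ε))
          simp only [mul_one] at h
          exact h
        exact hd.differentiableAt.differentiableWithinAt
      · intro x hx
        rw [interior_Ici] at hx
        have hd : HasDerivAt (fun t => u t + (η / ε) * t) ((-u x + b x) / ε + η / ε) x := by
          have h := (hu x hx.le).add ((hasDerivAt_id x).const_mul (η / ε))
          simp only [mul_one] at h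
          exact h
        rw [hd.deriv]
        have h1 := h x hx.le
        have h2 := (hbL x hx.le).2
        have h3 : (-u x + b x) / ε ≤ -η / ε := by
          apply div_le_div_of_nonneg_right ?_ hε.le
          linarith
        have h4 : -η / ε + η / ε = 0 := by ring
        linarith
    have hΔ : 0 ≤ ε * (u t₀ - d) / η := by
      apply div_nonneg _ hη.le
      have := hgt t₀ (le_refl _)
      nlinarith
    have hT0 : t₀ ≤ t₀ + ε * (u t₀ - d) / η := by linarith
    have hgT := hganti (self_mem_Ici) hT0 hT0
    simp only at hgT
    have hcalc : (η / ε) * (ε * (u t₀ - d) / η) = u t₀ - d := by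
      field_simp
    have hle : u (t₀ + ε * (u t₀ - d) / η) ≤ d := by nlinarith [hgT, hcalc]
    exact absurd hle (not_le.2 (hgt _ hT0))
  obtain ⟨s, hs0, hsη⟩ := hex
  refine ⟨s, fun t ht => ?_⟩
  have ht0 : t₀ ≤ t := le_trans hs0 ht
  have h1 : u t ≤ u s := hanti hs0 ht0 ht
  have h2 : d < u t := hgt t ht0
  rw [Real.dist_eq, abs_lt]
  constructor <;> linarith

/-- Main dichotomy for the case `u t₀ > d`. -/
lemma aux_main_above {ε t₀ c d : ℝ} (hε : 0 < ε) (hcd : c ≤ d) (b u : ℝ → ℝ)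
    (hbL : ∀ t : ℝ, t₀ ≤ t → b t ∈ Icc c d)
    (hu : ∀ t : ℝ, t₀ ≤ t → HasDerivAt u ((-u t + b t) / ε) t)
    (h0 : d < u t₀) :
    (∃ t₁ : ℝ, t₀ ≤ t₁ ∧ ∀ t : ℝ, t₁ ≤ t → u t ∈ Icc c d) ∨
    (AntitoneOn u (Ici t₀) ∧ Tendsto u atTop (nhds d)) := by
  have hcont : ContinuousOn u (Ici t₀) :=
    fun t ht => ((hu t ht).continuousAt).continuousWithinAt
  by_cases hA : ∃ s : ℝ, t₀ ≤ s ∧ u s ≤ d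
  · obtain ⟨s, hs0, hsd⟩ := hA
    have hIVT : d ∈ u '' (Icc t₀ s) := by
      apply intermediate_value_Icc' hs0 (hcont.mono (fun x hx => hx.1))
      exact ⟨hsd, h0.le⟩
    obtain ⟨t₁, ht₁mem, ht₁⟩ := hIVT
    left
    refine ⟨t₁, ht₁mem.1, fun t ht => ?_⟩
    constructor
    · -- lower bound via the reflected invariance lemma
      have hres := aux_stay_le (d := -c) hε (fun t => -b t) (fun t => -u t)
        (fun t ht => by simpa using (hbL t ht).1)
        (fun t ht => by
          have h := (hu t ht).neg
          exact h.congr_deriv (by ring))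
        ht₁mem.1 (by show -u t₁ ≤ -c; rw [ht₁]; linarith) t ht
      linarith
    · exact aux_stay_le hε b u (fun t ht => (hbL t ht).2) hu ht₁mem.1 (le_of_eq ht₁) t ht
  · push_neg at hA
    exact Or.inr (aux_above_forever hε b u hbL hu hA)

/-- Proposition 2: if `ε u'(t) = -u(t) + b(t)` with `ε > 0`, `b` continuous with
values in `L = [c,d]` on `[t₀,∞)`, and `u(t₀) ∉ L`, then either (i) `u(t) ∈ L`
for all `t ≥ t₁` and some finite `t₁ ≥ t₀`, or (ii) `u` is monotone on `[t₀,∞)`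
and converges at infinity to one of the endpoints `c` or `d`. -/
theorem solution_enters_interval_or_monotone
    (ε t₀ c d : ℝ) (hε : 0 < ε) (hcd : c ≤ d)
    (b u : ℝ → ℝ)
    (hb : ContinuousOn b (Set.Ici t₀))
    (hbL : ∀ t : ℝ, t₀ ≤ t → b t ∈ Set.Icc c d)
    (hu : ∀ t : ℝ, t₀ ≤ t → HasDerivAt u ((-u t + b t) / ε) t)
    (hu0 : u t₀ ∉ Set.Icc c d) :
    (∃ t₁ : ℝ, t₀ ≤ t₁ ∧ ∀ t : ℝ, t₁ ≤ t → u t ∈ Set.Icc c d) ∨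
    ((MonotoneOn u (Set.Ici t₀) ∨ AntitoneOn u (Set.Ici t₀)) ∧
      (Filter.Tendsto u Filter.atTop (nhds c) ∨
        Filter.Tendsto u Filter.atTop (nhds d))) := by
  rw [Set.mem_Icc, not_and_or, not_le, not_le] at hu0
  rcases hu0 with h0 | h0
  · -- u t₀ < c : reflect
    have key := aux_main_above (t₀ := t₀) (c := -d) (d := -c) hε (by linarith)
      (fun t => -b t) (fun t => -u t)
      (fun t ht => by
        have h1 := (hbL t ht).1
        have h2 := (hbL t ht).2
        exact ⟨by simpa using h2, by simpa using h1⟩)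
      (fun t ht => by
        have h := (hu t ht).neg
        exact h.congr_deriv (by ring))
      (by show -c < -u t₀; linarith)
    rcases key with ⟨t₁, ht₁, hmem⟩ | ⟨hanti, htend⟩
    · left
      refine ⟨t₁, ht₁, fun t ht => ?_⟩
      have h1 := (hmem t ht).1
      have h2 := (hmem t ht).2
      exact ⟨by linarith, by linarith⟩
    · right
      refine ⟨Or.inl ?_, Or.inl ?_⟩
      · intro x hx y hy hxy
        have h := hanti hx hy hxy
        simp only at h
        linarith
      · have h := htend.neg
        simpa using h
  · rcases aux_main_above hε hcd b u hbL hu h0 with h | ⟨h1, h2⟩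
    · exact Or.inl h
    · exact Or.inr ⟨Or.inr h1, Or.inr h2⟩
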